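/- For any two policies π and π*, η(π*) − η(π) = Σ_{s∈S} d^{π*}(s) Σ_{a∈A} π*(a|s) A^π(s,a), where d^{π*}(s) = Σ_{t=0}^∞ γ^t Pr_{τ∼π*}(s_t = s) is the (unnormalized) discounted state visitation measure of π*. -/

import Mathlib

open scoped BigOperators

/-- A finite, infinite-horizon discounted MDP `(S, A, P, r, ρ0, γ)`. -/
structure MDP (S A : Type) [Fintype S] [Fintype A] where
  P : S → A → S → ℝ
  r : S → ℝ
  ρ0 : S → ℝ
  γ : ℝ
  P_nonneg : ∀ s a s', 0 ≤ P s a s'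
  P_sum : ∀ s a, ∑ s', P s a s' = 1
  ρ0_nonneg : ∀ s, 0 ≤ ρ0 s
  ρ0_sum : ∑ s, ρ0 s = 1
  γ_pos : 0 < γ
  γ_lt_one : γ < 1

variable {S A : Type} [Fintype S] [Fintype A] [DecidableEq S] [DecidableEq A]

/-- A stochastic policy: a probability distribution over actions at each state. -/
def IsPolicy (π : S → A → ℝ) : Prop :=
  (∀ s a, 0 ≤ π s a) ∧ ∀ s, ∑ a, π s a = 1

namespace MDP

/-- Distribution of the state `s_t` when `s_0 ∼ d` and actions are sampled from `π`. -/
def stateDist (M : MDP S A) (π : S → A → ℝ) : ℕ → (S → ℝ) → S → ℝ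
  | 0, d => d
  | t + 1, d => fun s' => ∑ s, ∑ a, M.stateDist π t d s * π s a * M.P s a s'

/-- Dirac distribution concentrated at a state. -/
def dirac (s : S) : S → ℝ := fun x => if x = s then 1 else 0

/-- Value function `V^π(s) = E[∑_t γ^t r(s_t) | s_0 = s]`. -/
noncomputable def V (M : MDP S A) (π : S → A → ℝ) (s : S) : ℝ :=
  ∑' t : ℕ, M.γ ^ t * ∑ s', M.stateDist π t (dirac s) s' * M.r s'

/-- State-action value `Q^π(s,a) = r(s) + γ E_{s'∼P(·|s,a)}[V^π(s')]`. -/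
noncomputable def Q (M : MDP S A) (π : S → A → ℝ) (s : S) (a : A) : ℝ :=
  M.r s + M.γ * ∑ s', M.P s a s' * M.V π s'

/-- Advantage function `A^π(s,a) = Q^π(s,a) − V^π(s)`. -/
noncomputable def Adv (M : MDP S A) (π : S → A → ℝ) (s : S) (a : A) : ℝ :=
  M.Q π s a - M.V π s

/-- Expected discounted return `η(π) = E_{s0∼ρ0}[V^π(s0)]`. -/
noncomputable def η (M : MDP S A) (π : S → A → ℝ) : ℝ :=
  ∑ s, M.ρ0 s * M.V π s

/-- `E_{τ∼π*}[∑_t γ^t A^π(s_t, a_t)]`: expected discounted advantage sum of `π`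
along trajectories generated by `π*` from `ρ0`. -/
noncomputable def advSum (M : MDP S A) (π πStar : S → A → ℝ) : ℝ :=
  ∑' t : ℕ, M.γ ^ t * ∑ s, ∑ a, M.stateDist πStar t M.ρ0 s * πStar s a * M.Adv π s a

end MDP

section Aux

open MDP

lemma stateDist_nonneg (M : MDP S A) {π : S → A → ℝ} (hπ : IsPolicy π)
    {d : S → ℝ} (hd : ∀ s, 0 ≤ d s) : ∀ t s, 0 ≤ M.stateDist π t d s := by
  intro t
  induction t with
  | zero => exact hd
  | succ t ih =>
    intro s'
    simp only [MDP.stateDist]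
    refine Finset.sum_nonneg fun s _ => Finset.sum_nonneg fun a _ => ?_
    exact mul_nonneg (mul_nonneg (ih s) (hπ.1 s a)) (M.P_nonneg s a s')

lemma stateDist_sum (M : MDP S A) {π : S → A → ℝ} (hπ : IsPolicy π)
    (d : S → ℝ) : ∀ t, ∑ s, M.stateDist π t d s = ∑ s, d s := by
  intro t
  induction t with
  | zero => rfl
  | succ t ih =>
    simp only [MDP.stateDist]
    calc ∑ s', ∑ s, ∑ a, M.stateDist π t d s * π s a * M.P s a s'
        = ∑ s, ∑ a, ∑ s', M.stateDist π t d s * π s a * M.P s a s' := by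
          rw [Finset.sum_comm]
          exact Finset.sum_congr rfl fun s _ => Finset.sum_comm
      _ = ∑ s, M.stateDist π t d s := by
          refine Finset.sum_congr rfl fun s _ => ?_
          have : ∀ a, ∑ s', M.stateDist π t d s * π s a * M.P s a s'
              = M.stateDist π t d s * π s a := fun a => by
            rw [← Finset.mul_sum, M.P_sum, mul_one]
          simp only [this]
          rw [← Finset.mul_sum, hπ.2, mul_one]
      _ = ∑ s, d s := ih

lemma stateDist_le_one (M : MDP S A) {π : S → A → ℝ} (hπ : IsPolicy π) {d : S → ℝ}
    (hd0 : ∀ s, 0 ≤ d s) (hd1 : ∑ s, d s = 1) (t : ℕ) (s : S) :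
    M.stateDist π t d s ≤ 1 := by
  have := Finset.single_le_sum (f := fun s => M.stateDist π t d s)
    (fun s _ => stateDist_nonneg M hπ hd0 t s) (Finset.mem_univ s)
  rwa [stateDist_sum M hπ d t, hd1] at this

lemma stateDist_linear (M : MDP S A) (π : S → A → ℝ) (d : S → ℝ) :
    ∀ t s', M.stateDist π t d s' = ∑ s, d s * M.stateDist π t (dirac s) s' := by
  intro t
  induction t with
  | zero =>
    intro s'
    simp [MDP.stateDist, MDP.dirac, mul_ite, Finset.sum_ite_eq]
  | succ t ih =>
    intro s''
    simp only [MDP.stateDist]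
    calc ∑ s', ∑ a, M.stateDist π t d s' * π s' a * M.P s' a s''
        = ∑ s', ∑ a, ∑ s, d s * (M.stateDist π t (dirac s) s' * π s' a * M.P s' a s'') := by
          refine Finset.sum_congr rfl fun s' _ => Finset.sum_congr rfl fun a _ => ?_
          rw [ih s', Finset.sum_mul, Finset.sum_mul]
          exact Finset.sum_congr rfl fun s _ => by ring
      _ = ∑ s', ∑ s, ∑ a, d s * (M.stateDist π t (dirac s) s' * π s' a * M.P s' a s'') := by
          exact Finset.sum_congr rfl fun s' _ => Finset.sum_comm
      _ = ∑ s, ∑ s', ∑ a, d s * (M.stateDist π t (dirac s) s' * π s' a * M.P s' a s'') := by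
          rw [Finset.sum_comm]
      _ = ∑ s, d s * ∑ s', ∑ a, M.stateDist π t (dirac s) s' * π s' a * M.P s' a s'' := by
          refine Finset.sum_congr rfl fun s _ => ?_
          rw [Finset.mul_sum]
          exact Finset.sum_congr rfl fun s' _ => (Finset.mul_sum _ _ _).symm

lemma summable_geom_mul (M : MDP S A) {c : ℕ → ℝ} {C : ℝ}
    (h : ∀ t, |c t| ≤ C) : Summable (fun t => M.γ ^ t * c t) := by
  have hγ0 : (0:ℝ) ≤ M.γ := le_of_lt M.γ_pos
  refine Summable.of_norm_bounded (g := fun t => C * M.γ ^ t)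
    ((summable_geometric_of_lt_one hγ0 M.γ_lt_one).mul_left C) (fun t => ?_)
  rw [Real.norm_eq_abs, abs_mul, abs_pow, abs_of_nonneg hγ0, mul_comm]
  exact mul_le_mul_of_nonneg_right (h t) (pow_nonneg hγ0 t)

lemma sum_weight_bound {d x : S → ℝ} (hd0 : ∀ s, 0 ≤ d s) (hd1 : ∀ s, d s ≤ 1) :
    |∑ s, d s * x s| ≤ ∑ s, |x s| := by
  calc |∑ s, d s * x s| ≤ ∑ s, |d s * x s| := Finset.abs_sum_le_sum_abs _ _
    _ ≤ ∑ s, |x s| := Finset.sum_le_sum fun s _ => by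
        rw [abs_mul, abs_of_nonneg (hd0 s)]
        exact mul_le_of_le_one_left (abs_nonneg _) (hd1 s)

lemma weighted_V (M : MDP S A) {π : S → A → ℝ} (hπ : IsPolicy π) {d : S → ℝ}
    (hd0 : ∀ s, 0 ≤ d s) (hd1 : ∑ s, d s = 1) :
    ∑ s, d s * M.V π s = ∑' t : ℕ, M.γ ^ t * ∑ s', M.stateDist π t d s' * M.r s' := by
  have hdir0 : ∀ s : S, ∀ x, (0:ℝ) ≤ dirac s x := fun s x => by
    simp [MDP.dirac]; split <;> norm_num
  have hdir1 : ∀ s : S, ∑ x, dirac s x = 1 := fun s => by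
    simp [MDP.dirac]
  have hsum : ∀ s : S, Summable (fun t => M.γ ^ t *
      (d s * ∑ s', M.stateDist π t (dirac s) s' * M.r s')) := by
    intro s
    refine summable_geom_mul M (C := |d s| * ∑ s', |M.r s'|) fun t => ?_
    rw [abs_mul]
    refine mul_le_mul_of_nonneg_left ?_ (abs_nonneg _)
    exact sum_weight_bound (stateDist_nonneg M hπ (hdir0 s) t)
      (fun s' => stateDist_le_one M hπ (hdir0 s) (hdir1 s) t s')
  calc ∑ s, d s * M.V π s
      = ∑ s, ∑' t : ℕ, M.γ ^ t * (d s * ∑ s', M.stateDist π t (dirac s) s' * M.r s') := by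
        refine Finset.sum_congr rfl fun s _ => ?_
        rw [MDP.V, ← tsum_mul_left]
        exact tsum_congr fun t => by ring
    _ = ∑' t : ℕ, ∑ s, M.γ ^ t * (d s * ∑ s', M.stateDist π t (dirac s) s' * M.r s') := by
        rw [Summable.tsum_finsetSum (fun s _ => hsum s)]
    _ = ∑' t : ℕ, M.γ ^ t * ∑ s', M.stateDist π t d s' * M.r s' := by
        refine tsum_congr fun t => ?_
        rw [← Finset.mul_sum]
        congr 1
        calc ∑ s, d s * ∑ s', M.stateDist π t (dirac s) s' * M.r s'
            = ∑ s, ∑ s', d s * M.stateDist π t (dirac s) s' * M.r s' := by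
              refine Finset.sum_congr rfl fun s _ => ?_
              rw [Finset.mul_sum]
              exact Finset.sum_congr rfl fun s' _ => by ring
          _ = ∑ s', (∑ s, d s * M.stateDist π t (dirac s) s') * M.r s' := by
              rw [Finset.sum_comm]
              exact Finset.sum_congr rfl fun s' _ => (Finset.sum_mul _ _ _).symm
          _ = ∑ s', M.stateDist π t d s' * M.r s' := by
              refine Finset.sum_congr rfl fun s' _ => ?_
              rw [← stateDist_linear]

end Aux

set_option maxHeartbeats 1000000 in
/-- Performance difference in terms of the discounted state visitation measure
`d^{π*}(s) = ∑_t γ^t Pr_{τ∼π*}(s_t = s)`. -/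
theorem performance_difference_occupancy (M : MDP S A) (π πStar : S → A → ℝ)
    (hπ : IsPolicy π) (hπStar : IsPolicy πStar) :
    M.η πStar - M.η π =
      ∑ s, (∑' t : ℕ, M.γ ^ t * M.stateDist πStar t M.ρ0 s) *
        ∑ a, πStar s a * M.Adv π s a := by
  classical
  have hγ0 : (0:ℝ) ≤ M.γ := le_of_lt M.γ_pos
  set dT : ℕ → S → ℝ := fun t s => M.stateDist πStar t M.ρ0 s with hdT
  set g : S → ℝ := fun s => ∑ a, πStar s a * M.Adv π s a with hgdef
  set b : ℕ → ℝ := fun t => ∑ s, dT t s * M.V π s with hbdef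
  set c : ℕ → ℝ := fun t => ∑ s, dT t s * M.r s with hcdef
  have hdT0 : ∀ t s, 0 ≤ dT t s := fun t s =>
    stateDist_nonneg M hπStar M.ρ0_nonneg t s
  have hdT1 : ∀ t s, dT t s ≤ 1 := fun t s =>
    stateDist_le_one M hπStar M.ρ0_nonneg M.ρ0_sum t s
  have hb : Summable (fun t => M.γ ^ t * b t) :=
    summable_geom_mul M (C := ∑ s, |M.V π s|) fun t =>
      sum_weight_bound (hdT0 t) (hdT1 t)
  have hc : Summable (fun t => M.γ ^ t * c t) :=
    summable_geom_mul M (C := ∑ s, |M.r s|) fun t =>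
      sum_weight_bound (hdT0 t) (hdT1 t)
  have hb' : Summable (fun t => M.γ ^ (t+1) * b (t+1)) :=
    (summable_nat_add_iff 1).mpr hb
  -- unfolding of the advantage average
  have hg : ∀ s, g s = (M.r s - M.V π s) +
      M.γ * ∑ a, πStar s a * ∑ s', M.P s a s' * M.V π s' := by
    intro s
    simp only [hgdef, MDP.Adv, MDP.Q]
    calc ∑ a, πStar s a * (M.r s + M.γ * ∑ s', M.P s a s' * M.V π s' - M.V π s)
        = ∑ a, (πStar s a * (M.r s - M.V π s) +
            M.γ * (πStar s a * ∑ s', M.P s a s' * M.V π s')) :=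
          Finset.sum_congr rfl fun a _ => by ring
      _ = (∑ a, πStar s a) * (M.r s - M.V π s) +
            M.γ * ∑ a, πStar s a * ∑ s', M.P s a s' * M.V π s' := by
          rw [Finset.sum_add_distrib, ← Finset.sum_mul, ← Finset.mul_sum]
      _ = _ := by rw [hπStar.2, one_mul]
  -- one-step pushforward
  have hstep : ∀ t, ∑ s, dT t s * ∑ a, πStar s a * ∑ s', M.P s a s' * M.V π s'
      = b (t+1) := by
    intro t
    show _ = ∑ s', M.stateDist πStar (t+1) M.ρ0 s' * M.V π s'
    simp only [MDP.stateDist]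
    calc ∑ s, dT t s * ∑ a, πStar s a * ∑ s', M.P s a s' * M.V π s'
        = ∑ s, ∑ a, ∑ s', dT t s * πStar s a * M.P s a s' * M.V π s' := by
          simp only [Finset.mul_sum]
          exact Finset.sum_congr rfl fun s _ => Finset.sum_congr rfl fun a _ =>
            Finset.sum_congr rfl fun s' _ => by ring
      _ = ∑ s, ∑ s', ∑ a, dT t s * πStar s a * M.P s a s' * M.V π s' :=
          Finset.sum_congr rfl fun s _ => Finset.sum_comm
      _ = ∑ s', ∑ s, ∑ a, dT t s * πStar s a * M.P s a s' * M.V π s' :=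
          Finset.sum_comm
      _ = ∑ s', (∑ s, ∑ a, M.stateDist πStar t M.ρ0 s * πStar s a * M.P s a s')
            * M.V π s' := by
          refine Finset.sum_congr rfl fun s' _ => ?_
          rw [Finset.sum_mul]
          exact Finset.sum_congr rfl fun s _ => (Finset.sum_mul _ _ _).symm
  -- key per-step identity
  have key : ∀ t, ∑ s, dT t s * g s = c t + M.γ * b (t+1) - b t := by
    intro t
    calc ∑ s, dT t s * g s
        = ∑ s, ((dT t s * M.r s - dT t s * M.V π s) +
            M.γ * (dT t s * ∑ a, πStar s a * ∑ s', M.P s a s' * M.V π s')) :=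
          Finset.sum_congr rfl fun s _ => by rw [hg s]; ring
      _ = (∑ s, dT t s * M.r s - ∑ s, dT t s * M.V π s) +
            M.γ * ∑ s, dT t s * ∑ a, πStar s a * ∑ s', M.P s a s' * M.V π s' := by
          rw [Finset.sum_add_distrib, Finset.sum_sub_distrib, ← Finset.mul_sum]
      _ = c t + M.γ * b (t+1) - b t := by rw [hstep t]; ring
  -- per-state summability
  have hs : ∀ s : S, Summable (fun t => M.γ ^ t * dT t s * g s) := by
    intro s
    have : Summable (fun t => M.γ ^ t * (dT t s * g s)) := by
      refine summable_geom_mul M (C := |g s|) fun t => ?_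
      rw [abs_mul, abs_of_nonneg (hdT0 t s)]
      exact mul_le_of_le_one_left (abs_nonneg _) (hdT1 t s)
    simpa [mul_assoc] using this
  have hη : M.η πStar = ∑' t : ℕ, M.γ ^ t * c t :=
    weighted_V M hπStar M.ρ0_nonneg M.ρ0_sum
  have hb0 : b 0 = M.η π := rfl
  symm
  calc ∑ s, (∑' t : ℕ, M.γ ^ t * dT t s) * g s
      = ∑ s, ∑' t : ℕ, M.γ ^ t * dT t s * g s := by
        refine Finset.sum_congr rfl fun s _ => ?_
        rw [← tsum_mul_right]
    _ = ∑' t : ℕ, ∑ s, M.γ ^ t * dT t s * g s := (Summable.tsum_finsetSum (fun s _ => hs s)).symm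
    _ = ∑' t : ℕ, ((M.γ ^ t * c t + M.γ ^ (t+1) * b (t+1)) - M.γ ^ t * b t) := by
        refine tsum_congr fun t => ?_
        have h1 : ∑ s, M.γ ^ t * dT t s * g s = M.γ ^ t * ∑ s, dT t s * g s := by
          rw [Finset.mul_sum]
          exact Finset.sum_congr rfl fun s _ => by ring
        rw [h1, key t]; ring
    _ = (∑' t : ℕ, (M.γ ^ t * c t + M.γ ^ (t+1) * b (t+1)))
          - ∑' t : ℕ, M.γ ^ t * b t := Summable.tsum_sub (hc.add hb') hb
    _ = (∑' t : ℕ, M.γ ^ t * c t) + (∑' t : ℕ, M.γ ^ (t+1) * b (t+1))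
          - ∑' t : ℕ, M.γ ^ t * b t := by rw [Summable.tsum_add hc hb']
    _ = M.η πStar - M.η π := by
        have hshift := Summable.tsum_eq_zero_add hb
        simp only [pow_zero, one_mul] at hshift
        rw [hη]
        rw [hb0] at hshift
        linarith [hshift]
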